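/- Let X be a compact metric space admitting an intrinsic isometry f : X → Y into some metric space Y. Then the metric on X is a length metric (intrinsic metric): for all x, x' ∈ X and every ε > 0 there exists a finite chain x = x₀, …, xₙ = x' with ∑ |x_{i-1} xᵢ| ≤ |x x'| + ε and each |x_{i-1} xᵢ| ≤ ε. -/

import Mathlib

open Filter
open scoped ENNReal

section PullDefs
variable {X Y : Type*} [MetricSpace X] [MetricSpace Y]

/-- `c 0, …, c n` is an `ε`-chain from `x` to `x'`. -/
def IsEpsChain (ε : ℝ) (n : ℕ) (c : ℕ → X) (x x' : X) : Prop :=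
  c 0 = x ∧ c n = x' ∧ ∀ i < n, dist (c i) (c (i + 1)) ≤ ε

/-- `pull_{f,ε}(x,x')`: infimum over `ε`-chains of the sum of image distances. -/
noncomputable def pullEps (f : X → Y) (ε : ℝ) (x x' : X) : ℝ≥0∞ :=
  ⨅ (n : ℕ) (c : ℕ → X) (_ : IsEpsChain ε n c x x'),
    ∑ i ∈ Finset.range n, edist (f (c i)) (f (c (i + 1)))

/-- `pull_f(x,x') = lim_{ε→0+} pull_{f,ε}(x,x') = sup_{ε>0} pull_{f,ε}(x,x')`. -/
noncomputable def pullMet (f : X → Y) (x x' : X) : ℝ≥0∞ :=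
  ⨆ (ε : ℝ) (_ : 0 < ε), pullEps f ε x x'

/-- `f` is an intrinsic isometry if the pulled-back metric coincides with the metric of `X`. -/
def IsIntrinsicIsometry (f : X → Y) : Prop :=
  Continuous f ∧ ∀ x x', edist x x' = pullMet f x x'

end PullDefs

/-- `pack_ε(X)`: maximal number of points at pairwise distance `> ε`. -/
noncomputable def packNum (X : Type*) [MetricSpace X] (ε : ℝ) : ℕ :=
  sSup {n | ∃ s : Finset X, s.card = n ∧ ∀ x ∈ s, ∀ y ∈ s, x ≠ y → ε < dist x y}

section Aux
variable {X Y : Type*} [MetricSpace X] [MetricSpace Y]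

lemma edist_le_sum_img (f : X → Y) (n : ℕ) (c : ℕ → X) :
    edist (f (c 0)) (f (c n)) ≤ ∑ i ∈ Finset.range n, edist (f (c i)) (f (c (i + 1))) := by
  induction n with
  | zero => simp
  | succ n ih =>
    rw [Finset.sum_range_succ]
    exact le_trans (edist_triangle _ (f (c n)) _) (add_le_add_left ih _)

lemma pullEps_antitone (f : X → Y) {δ δ' : ℝ} (h : δ ≤ δ') (a b : X) :
    pullEps f δ' a b ≤ pullEps f δ a b := by
  refine le_iInf fun n => le_iInf fun c => le_iInf fun hc => ?_
  exact iInf_le_of_le n (iInf_le_of_le c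
    (iInf_le_of_le ⟨hc.1, hc.2.1, fun i hi => (hc.2.2 i hi).trans h⟩ le_rfl))

lemma edist_img_le_pullEps (f : X → Y) (δ : ℝ) (a b : X) :
    edist (f a) (f b) ≤ pullEps f δ a b := by
  refine le_iInf fun n => le_iInf fun c => le_iInf fun hc => ?_
  calc edist (f a) (f b) = edist (f (c 0)) (f (c n)) := by rw [hc.1, hc.2.1]
  _ ≤ _ := edist_le_sum_img f n c

lemma pullEps_le_pullMet (f : X → Y) {δ : ℝ} (hδ : 0 < δ) (a b : X) :
    pullEps f δ a b ≤ pullMet f a b :=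
  le_iSup₂ (f := fun (ε : ℝ) (_ : 0 < ε) => pullEps f ε a b) δ hδ

lemma lipschitz_of_intrinsic {f : X → Y} (hf : IsIntrinsicIsometry f) (a b : X) :
    edist (f a) (f b) ≤ edist a b := by
  rw [hf.2 a b]
  exact le_trans (edist_img_le_pullEps f 1 a b) (pullEps_le_pullMet f one_pos a b)

lemma dist_img_le_dist {f : X → Y} (hf : IsIntrinsicIsometry f) (a b : X) :
    dist (f a) (f b) ≤ dist a b := by
  have h := lipschitz_of_intrinsic hf a b
  rw [edist_dist, edist_dist] at h
  exact (ENNReal.ofReal_le_ofReal_iff dist_nonneg).mp h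

lemma pullEps_le_edist {f : X → Y} (hf : IsIntrinsicIsometry f) {δ : ℝ} (hδ : 0 < δ)
    (a b : X) : pullEps f δ a b ≤ edist a b := by
  rw [hf.2 a b]; exact pullEps_le_pullMet f hδ a b

lemma pullEps_subchain (f : X → Y) {δ : ℝ} {n : ℕ} {c : ℕ → X} {x x' : X}
    (hc : IsEpsChain δ n c x x') {p q : ℕ} (hpq : p ≤ q) (hqn : q ≤ n) :
    pullEps f δ (c p) (c q) ≤ ∑ i ∈ Finset.Ico p q, edist (f (c i)) (f (c (i + 1))) := by
  have hchain : IsEpsChain δ (q - p) (fun i => c (p + i)) (c p) (c q) := by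
    refine ⟨by simp, by simp [Nat.add_sub_cancel' hpq], fun i hi => ?_⟩
    exact hc.2.2 (p + i) (by omega)
  calc pullEps f δ (c p) (c q)
      ≤ ∑ i ∈ Finset.range (q - p), edist (f (c (p + i))) (f (c (p + (i + 1)))) :=
        iInf_le_of_le (q - p) (iInf_le_of_le (fun i => c (p + i)) (iInf_le_of_le hchain le_rfl))
    _ = ∑ i ∈ Finset.Ico p q, edist (f (c i)) (f (c (i + 1))) := by
        rw [Finset.sum_Ico_eq_sum_range (fun i => edist (f (c i)) (f (c (i + 1)))) p q]
        exact Finset.sum_congr rfl fun i _ => by rw [show p + (i + 1) = p + i + 1 by omega]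

lemma pullEps_perturb {X Y : Type*} [MetricSpace X] [MetricSpace Y] {f : X → Y}
    (hf : IsIntrinsicIsometry f) {δ : ℝ} {a b a' b' : X}
    (ha : dist a a' ≤ δ) (hb : dist b' b ≤ δ) :
    pullEps f δ a b ≤ edist a a' + pullEps f δ a' b' + edist b' b := by
  conv_rhs => rw [pullEps]
  simp only [ENNReal.add_iInf, ENNReal.iInf_add]
  refine le_iInf fun n => le_iInf fun c => le_iInf fun hc => ?_
  set c'' : ℕ → X := fun i => if i = 0 then a else if i ≤ n + 1 then c (i - 1) else b with hc''
  have hchain : IsEpsChain δ (n + 2) c'' a b := by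
    refine ⟨by simp [hc''], by simp [hc''], fun i hi => ?_⟩
    rcases Nat.eq_zero_or_pos i with h0 | hpos
    · subst h0
      have e1 : c'' 0 = a := by simp [hc'']
      have e2 : c'' 1 = a' := by simp [hc'', hc.1]
      rw [e1, e2]; exact ha
    · rcases Nat.lt_or_ge i (n + 1) with hlt | hge
      · have e1 : c'' i = c (i - 1) := by
          simp only [hc'']; rw [if_neg (by omega), if_pos (by omega)]
        have e2 : c'' (i + 1) = c i := by
          simp only [hc'']; rw [if_neg (by omega), if_pos (by omega)]; congr 1
        rw [e1, e2]
        have := hc.2.2 (i - 1) (by omega)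
        rwa [show i - 1 + 1 = i by omega] at this
      · have hieq : i = n + 1 := by omega
        subst hieq
        have e1 : c'' (n + 1) = b' := by
          simp only [hc'']
          rw [if_neg (by omega), if_pos (by omega)]
          simp [hc.2.1]
        have e2 : c'' (n + 2) = b := by
          simp only [hc'']
          rw [if_neg (by omega), if_neg (by omega)]
        rw [e1, e2]; exact hb
  have hsum : ∑ i ∈ Finset.range (n + 2), edist (f (c'' i)) (f (c'' (i + 1)))
      = edist (f a) (f a') + ∑ i ∈ Finset.range n, edist (f (c i)) (f (c (i + 1)))
        + edist (f b') (f b) := by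
    rw [Finset.sum_range_succ, Finset.sum_range_succ']
    have e0 : c'' 0 = a := by simp [hc'']
    have e1 : c'' 1 = a' := by simp [hc'', hc.1]
    have en1 : c'' (n + 1) = b' := by
      simp only [hc'']; rw [if_neg (by omega), if_pos (by omega)]; simp [hc.2.1]
    have en2 : c'' (n + 2) = b := by
      simp only [hc'']; rw [if_neg (by omega), if_neg (by omega)]
    have hterm : ∀ i < n, edist (f (c'' (i + 1))) (f (c'' (i + 1 + 1)))
        = edist (f (c i)) (f (c (i + 1))) := by
      intro i hi
      have e2 : c'' (i + 1) = c i := by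
        simp only [hc'']; rw [if_neg (by omega), if_pos (by omega)]; congr 1
      have e3 : c'' (i + 2) = c (i + 1) := by
        simp only [hc'']; rw [if_neg (by omega), if_pos (by omega)]; congr 1
      rw [show i + 1 + 1 = i + 2 by omega, e2, e3]
    rw [e0, e1, en1, en2]
    rw [Finset.sum_congr rfl fun i hi => hterm i (Finset.mem_range.mp hi)]
    ring
  refine le_trans (iInf_le_of_le (n + 2)
    (iInf_le_of_le c'' (iInf_le_of_le hchain le_rfl))) ?_
  rw [hsum]
  gcongr
  · exact lipschitz_of_intrinsic hf a a'
  · exact lipschitz_of_intrinsic hf b' b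

end Aux

lemma uniform_pullEps {X Y : Type*} [MetricSpace X] [CompactSpace X] [MetricSpace Y]
    {f : X → Y} (hf : IsIntrinsicIsometry f) {η : ℝ} (hη : 0 < η) (x0 : X) :
    ∃ δ : ℝ, 0 < δ ∧ ∀ a b : X, edist a b ≤ pullEps f δ a b + ENNReal.ofReal η := by
  have hpt : ∀ p : X × X, ∃ d : ℝ, 0 < d ∧
      edist p.1 p.2 ≤ pullEps f d p.1 p.2 + ENNReal.ofReal (η / 2) := by
    intro p
    by_cases h0 : edist p.1 p.2 = 0
    · exact ⟨1, one_pos, by rw [h0]; exact zero_le⟩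
    · have hlt : edist p.1 p.2 - ENNReal.ofReal (η / 2) < pullMet f p.1 p.2 := by
        rw [← hf.2]
        exact ENNReal.sub_lt_self (edist_ne_top _ _) h0
          (by simp [ENNReal.ofReal_eq_zero]; linarith)
      rw [pullMet, lt_iSup_iff] at hlt
      obtain ⟨d, hlt⟩ := hlt
      rw [lt_iSup_iff] at hlt
      obtain ⟨hd, hlt⟩ := hlt
      exact ⟨d, hd, tsub_le_iff_right.mp hlt.le⟩
  choose dp hdp hle using hpt
  set r : X × X → ℝ := fun p => min (dp p) (η / 8) with hr
  have hrpos : ∀ p, 0 < r p := fun p => lt_min (hdp p) (by linarith)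
  set U : X × X → Set (X × X) := fun p => Metric.ball p.1 (r p) ×ˢ Metric.ball p.2 (r p)
    with hU
  have hopen : ∀ p, IsOpen (U p) := fun p => Metric.isOpen_ball.prod Metric.isOpen_ball
  have hcov : (Set.univ : Set (X × X)) ⊆ ⋃ p, U p := by
    intro q _
    exact Set.mem_iUnion.mpr ⟨q, Set.mem_prod.mpr
      ⟨Metric.mem_ball_self (hrpos q), Metric.mem_ball_self (hrpos q)⟩⟩
  obtain ⟨t, ht⟩ := isCompact_univ.elim_finite_subcover U hopen hcov
  have htne : t.Nonempty := by
    obtain ⟨p, hp⟩ := Set.mem_iUnion₂.mp (ht (Set.mem_univ (x0, x0)))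
    exact ⟨p, hp.1⟩
  refine ⟨t.inf' htne dp, (Finset.lt_inf'_iff htne).mpr fun p _ => hdp p, fun a b => ?_⟩
  obtain ⟨p, hpmem⟩ := Set.mem_iUnion₂.mp (ht (Set.mem_univ (a, b)))
  obtain ⟨hpt', hab⟩ := hpmem
  have h1 : dist a p.1 < r p := Metric.mem_ball.mp hab.1
  have h2 : dist b p.2 < r p := Metric.mem_ball.mp hab.2
  have e1 : edist a p.1 ≤ ENNReal.ofReal (η / 8) := by
    rw [edist_dist]
    exact ENNReal.ofReal_le_ofReal (le_of_lt (lt_of_lt_of_le h1 (min_le_right _ _)))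
  have e2 : edist b p.2 ≤ ENNReal.ofReal (η / 8) := by
    rw [edist_dist]
    exact ENNReal.ofReal_le_ofReal (le_of_lt (lt_of_lt_of_le h2 (min_le_right _ _)))
  have hperturb : pullEps f (dp p) p.1 p.2
      ≤ edist p.1 a + pullEps f (dp p) a b + edist b p.2 :=
    pullEps_perturb hf
      (by rw [dist_comm]; exact le_of_lt (lt_of_lt_of_le h1 (min_le_left _ _)))
      (le_of_lt (lt_of_lt_of_le h2 (min_le_left _ _)))
  have hanti : pullEps f (dp p) a b ≤ pullEps f (t.inf' htne dp) a b :=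
    pullEps_antitone f (Finset.inf'_le dp hpt') a b
  calc edist a b ≤ edist a p.1 + edist p.1 p.2 + edist p.2 b := edist_triangle4 _ _ _ _
    _ ≤ ENNReal.ofReal (η / 8) + (pullEps f (dp p) p.1 p.2 + ENNReal.ofReal (η / 2))
        + ENNReal.ofReal (η / 8) := by
        gcongr
        · exact hle p
        · rw [edist_comm]; exact e2
    _ ≤ ENNReal.ofReal (η / 8) + ((edist p.1 a + pullEps f (dp p) a b + edist b p.2)
        + ENNReal.ofReal (η / 2)) + ENNReal.ofReal (η / 8) := by gcongr
    _ ≤ ENNReal.ofReal (η / 8) + ((ENNReal.ofReal (η / 8) + pullEps f (t.inf' htne dp) a b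
        + ENNReal.ofReal (η / 8)) + ENNReal.ofReal (η / 2)) + ENNReal.ofReal (η / 8) := by
        gcongr
        rw [edist_comm]; exact e1
    _ = pullEps f (t.inf' htne dp) a b + (ENNReal.ofReal (η / 8) + ENNReal.ofReal (η / 8)
        + ENNReal.ofReal (η / 8) + ENNReal.ofReal (η / 8) + ENNReal.ofReal (η / 2)) := by
        ring
    _ ≤ pullEps f (t.inf' htne dp) a b + ENNReal.ofReal η := by
        gcongr
        rw [← ENNReal.ofReal_add (by linarith) (by linarith),
            ← ENNReal.ofReal_add (by linarith) (by linarith),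
            ← ENNReal.ofReal_add (by linarith) (by linarith),
            ← ENNReal.ofReal_add (by linarith) (by linarith)]
        exact ENNReal.ofReal_le_ofReal (by linarith)

/-- a compact metric space admitting an intrinsic isometry has a length
(intrinsic) metric, in the chain formulation. -/
theorem intrinsicIsometry_implies_length {X Y : Type*} [MetricSpace X] [CompactSpace X]
    [MetricSpace Y] (f : X → Y) (hf : IsIntrinsicIsometry f) :
    ∀ x x' : X, ∀ ε > (0 : ℝ), ∃ (n : ℕ) (c : ℕ → X), c 0 = x ∧ c n = x' ∧
      (∀ i < n, dist (c i) (c (i + 1)) ≤ ε) ∧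
      ∑ i ∈ Finset.range n, dist (c i) (c (i + 1)) ≤ dist x x' + ε := by
  intro x x' ε hε
  set d : ℝ := dist x x' with hd
  have hd0 : 0 ≤ d := dist_nonneg
  set m : ℕ := ⌊(d + 1) / (ε / 2)⌋₊ + 1 with hm
  have hm1 : 1 ≤ m := by omega
  set η : ℝ := min 1 (ε / (2 * (m + 1))) with hηdef
  have hη : 0 < η := lt_min one_pos (by positivity)
  have hη1 : η ≤ 1 := min_le_left _ _
  have hη2 : η ≤ ε / (2 * (m + 1)) := min_le_right _ _
  have hmpos : (0:ℝ) < 2 * ((m:ℝ) + 1) := by positivity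
  have hηm : η * (2 * ((m:ℝ) + 1)) ≤ ε := by
    have := (le_div_iff₀ hmpos).mp (by exact_mod_cast hη2)
    linarith
  have hη4 : η ≤ ε / 4 := by
    have h4 : (4:ℝ) ≤ 2 * ((m:ℝ) + 1) := by
      have : (1:ℝ) ≤ (m:ℝ) := by exact_mod_cast hm1
      linarith
    nlinarith [hη.le]
  obtain ⟨δ₀, hδ₀, huni₀⟩ := uniform_pullEps hf hη x
  set δ : ℝ := min δ₀ (ε / 4) with hδdef
  have hδ : 0 < δ := lt_min hδ₀ (by linarith)
  have hδ4 : δ ≤ ε / 4 := min_le_right _ _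
  have huni : ∀ a b : X, edist a b ≤ pullEps f δ a b + ENNReal.ofReal η := by
    intro a b
    exact (huni₀ a b).trans (add_le_add_left
      (pullEps_antitone f (min_le_left _ _) a b) _)
  -- extract a near-optimal δ-chain
  have hne : pullEps f δ x x' < edist x x' + ENNReal.ofReal η :=
    lt_of_le_of_lt (pullEps_le_edist hf hδ x x')
      (ENNReal.lt_add_right (edist_ne_top _ _)
        (by simp only [ne_eq, ENNReal.ofReal_eq_zero, not_le]; linarith))
  rw [pullEps] at hne
  simp only [iInf_lt_iff] at hne
  obtain ⟨n, c, hc, hsum⟩ := hne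
  -- real bookkeeping
  set r : ℕ → ℝ := fun i => dist (f (c i)) (f (c (i + 1))) with hrdef
  set s : ℕ → ℝ := fun t => ∑ i ∈ Finset.range t, r i with hsdef
  have hs0 : s 0 = 0 := by simp [hsdef]
  have hrnn : ∀ i, 0 ≤ r i := fun i => dist_nonneg
  have hsmono : Monotone s := fun a b hab =>
    Finset.sum_le_sum_of_subset_of_nonneg (Finset.range_subset_range.mpr hab)
      (fun i _ _ => hrnn i)
  have hrδ : ∀ i < n, r i ≤ δ := fun i hi =>
    (dist_img_le_dist hf _ _).trans (hc.2.2 i hi)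
  have hSn : s n ≤ d + η := by
    have h2 : (∑ i ∈ Finset.range n, edist (f (c i)) (f (c (i + 1)))).toReal
        ≤ (edist x x' + ENNReal.ofReal η).toReal :=
      ENNReal.toReal_mono
        (ENNReal.add_ne_top.mpr ⟨edist_ne_top _ _, ENNReal.ofReal_ne_top⟩) hsum.le
    rw [ENNReal.toReal_sum (fun i _ => edist_ne_top _ _),
        ENNReal.toReal_add (edist_ne_top _ _) ENNReal.ofReal_ne_top,
        ENNReal.toReal_ofReal hη.le] at h2
    simpa only [← dist_edist] using h2
  have keyA : ∀ p q, p ≤ q → q ≤ n → dist (c p) (c q) ≤ s q - s p + η := by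
    intro p q hpq hqn
    have h1 : edist (c p) (c q)
        ≤ (∑ i ∈ Finset.Ico p q, edist (f (c i)) (f (c (i + 1)))) + ENNReal.ofReal η :=
      (huni _ _).trans (add_le_add_left (pullEps_subchain f hc hpq hqn) _)
    have h2 := ENNReal.toReal_mono
      (ENNReal.add_ne_top.mpr ⟨(ENNReal.sum_lt_top.mpr
        (fun i _ => (edist_lt_top _ _))).ne, ENNReal.ofReal_ne_top⟩) h1
    rw [ENNReal.toReal_add (ENNReal.sum_lt_top.mpr
          (fun i _ => (edist_lt_top _ _))).ne ENNReal.ofReal_ne_top,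
        ENNReal.toReal_sum (fun i _ => edist_ne_top _ _),
        ENNReal.toReal_ofReal hη.le] at h2
    simp only [← dist_edist] at h2
    have h3 : ∑ i ∈ Finset.Ico p q, r i = s q - s p := Finset.sum_Ico_eq_sub r hpq
    rw [hsdef] at h3 ⊢
    simp only [hrdef] at h3 h2 ⊢
    linarith [h2, h3.le, h3.ge]
  -- greedy coarsening
  set K : ℕ → ℕ := fun j => sInf {t | (j : ℝ) * (ε / 2) ≤ s t ∨ n ≤ t} with hKdef
  have hKne : ∀ j : ℕ, {t | (j : ℝ) * (ε / 2) ≤ s t ∨ n ≤ t}.Nonempty :=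
    fun j => ⟨n, Or.inr le_rfl⟩
  have hKset : ∀ j : ℕ, (j : ℝ) * (ε / 2) ≤ s (K j) ∨ n ≤ K j := fun j =>
    Nat.sInf_mem (hKne j)
  have hKn : ∀ j, K j ≤ n := fun j => Nat.sInf_le (Or.inr le_rfl)
  have hK0 : K 0 = 0 :=
    Nat.eq_zero_of_le_zero (Nat.sInf_le (Or.inl (by simp [hs0])))
  have hKmono : ∀ j, K j ≤ K (j + 1) := by
    intro j
    apply Nat.sInf_le
    rcases hKset (j + 1) with h | h
    · left
      refine le_trans ?_ h
      have : (j:ℝ) ≤ (j:ℝ) + 1 := by linarith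
      push_cast
      nlinarith [hε.le]
    · exact Or.inr h
  have hgap : ∀ j, s (K (j + 1)) ≤ s (K j) + (ε / 2 + δ) := by
    intro j
    rcases le_or_gt (K (j + 1)) (K j) with hle' | hlt'
    · have := hsmono hle'
      have : s (K (j+1)) ≤ s (K j) := this
      linarith
    · have ht1 : 1 ≤ K (j + 1) := by omega
      have hnotmem : K (j + 1) - 1 ∉ {t | ((j:ℕ) + 1 : ℝ) * (ε / 2) ≤ s t ∨ n ≤ t} := by
        have : K (j + 1) - 1 < K (j + 1) := by omega
        have h := Nat.notMem_of_lt_sInf (s := {t | ((j + 1 : ℕ) : ℝ) * (ε / 2) ≤ s t ∨ n ≤ t})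
          (by rw [← hKdef] at *; push_cast; exact_mod_cast this)
        convert h using 3
        push_cast
        ring_nf
      simp only [Set.mem_setOf_eq, not_or, not_le] at hnotmem
      obtain ⟨hs1, hs2⟩ := hnotmem
      have hst : s (K (j + 1)) = s (K (j + 1) - 1) + r (K (j + 1) - 1) := by
        rw [show K (j + 1) = (K (j + 1) - 1) + 1 by omega]
        simp [hsdef, Finset.sum_range_succ]
      have hKjlt : K j < n := by omega
      have hKjmem : (j : ℝ) * (ε / 2) ≤ s (K j) := by
        rcases hKset j with h | h
        · exact h
        · omega
      have hr : r (K (j + 1) - 1) ≤ δ := hrδ _ hs2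
      push_cast at hs1
      linarith
  have hKm : K m = n := by
    by_contra hne'
    have hlt' : K m < n := lt_of_le_of_ne (hKn m) hne'
    have hmem : (m : ℝ) * (ε / 2) ≤ s (K m) := by
      rcases hKset m with h | h
      · exact h
      · omega
    have hsle : s (K m) ≤ s n := hsmono (hKn m)
    have hfl : (d + 1) / (ε / 2) < (m : ℝ) := by
      rw [hm]
      push_cast
      exact Nat.lt_floor_add_one _
    have hd1 : d + 1 < (m : ℝ) * (ε / 2) := by
      rw [div_lt_iff₀ (by linarith : (0:ℝ) < ε / 2)] at hfl
      linarith
    linarith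
  refine ⟨m, fun j => c (K j), by show c (K 0) = x; rw [hK0, hc.1], by show c (K m) = x'; rw [hKm, hc.2.1], ?_, ?_⟩
  · intro j _
    have h1 := keyA (K j) (K (j + 1)) (hKmono j) (hKn (j + 1))
    have h2 := hgap j
    linarith
  · calc ∑ j ∈ Finset.range m, dist (c (K j)) (c (K (j + 1)))
        ≤ ∑ j ∈ Finset.range m, (s (K (j + 1)) - s (K j) + η) :=
          Finset.sum_le_sum fun j _ => keyA (K j) (K (j + 1)) (hKmono j) (hKn (j + 1))
      _ = (s (K m) - s (K 0)) + m * η := by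
          rw [Finset.sum_add_distrib, Finset.sum_range_sub (fun j => s (K j))]
          simp [mul_comm]
      _ ≤ d + ε := by
          rw [hKm, hK0, hs0]
          have hcast : (0:ℝ) ≤ (m:ℝ) := Nat.cast_nonneg m
          nlinarith [hSn, hηm, hη.le]
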